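/- arXiv:2404.16321 — 2 statements merged into one kernel-verified Lean document; each statement's English description precedes it below -/
import Mathlib

section
/- For any polynomial functor p, the limit c_p = lim(⋯ → p^((2)) → p^((1)) → p^((0))) of the chain defined by p^((0)) = y and p^((1+i)) = y × (p ◁ p^((i))), with projection maps π^((i)), carries a ◁-comonoid structure: a counit ε : c_p → y (the projection to p^((0))) and a comultiplication δ : c_p → c_p ◁ c_p, satisfying counitality and coassociativity. -/
universe u

/-- A morphism of polynomial functors. -/
structure PolyHom (p q : PFunctor.{u, u}) : Type u where
  onPos : p.A → q.A
  onDir : ∀ a : p.A, q.B (onPos a) → p.B a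

/-- Identity morphism. -/
def idHom (p : PFunctor.{u, u}) : PolyHom p p := ⟨fun a => a, fun _ d => d⟩

/-- Composition (diagrammatic order). -/
def composePoly {p q r : PFunctor.{u, u}} (φ : PolyHom p q) (ψ : PolyHom q r) : PolyHom p r :=
  ⟨fun a => ψ.onPos (φ.onPos a), fun a d => φ.onDir a (ψ.onDir (φ.onPos a) d)⟩

/-- The functorial action of `◁` (composition of polynomials) on morphisms. -/
def compHom {p p' q q' : PFunctor.{u, u}} (φ : PolyHom p p') (ψ : PolyHom q q') :
    PolyHom (p.comp q) (p'.comp q') where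
  onPos x := ⟨φ.onPos x.1, fun b => ψ.onPos (x.2 (φ.onDir x.1 b))⟩
  onDir x d := ⟨φ.onDir x.1 d.1, ψ.onDir _ d.2⟩

/-- The identity polynomial `y` (the unit for `◁`). -/
def yPoly : PFunctor.{u, u} := ⟨PUnit, fun _ => PUnit⟩

/-- The left unitor `y ◁ p → p`. -/
def lunitHom (p : PFunctor.{u, u}) : PolyHom (yPoly.comp p) p where
  onPos x := x.2 PUnit.unit
  onDir x d := ⟨PUnit.unit, d⟩

/-- The right unitor `p ◁ y → p`. -/
def runitHom (p : PFunctor.{u, u}) : PolyHom (p.comp yPoly) p where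
  onPos x := x.1
  onDir _ d := ⟨d, PUnit.unit⟩

/-- The associator `(p ◁ q) ◁ r → p ◁ (q ◁ r)`. -/
def compAssocHom (p q r : PFunctor.{u, u}) :
    PolyHom ((p.comp q).comp r) (p.comp (q.comp r)) where
  onPos x := ⟨x.1.1, fun b => ⟨x.1.2 b, fun c => x.2 ⟨b, c⟩⟩⟩
  onDir x d := ⟨⟨d.1, d.2.1⟩, d.2.2⟩

/-- Finite paths from the root of a `q`-behavior tree (an element of the M-type `q.M`)
to one of its subtrees: the directions of the cofree comonad. -/
inductive MPath (p : PFunctor.{u, u}) : p.M → Type u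
  | nil (t : p.M) : MPath p t
  | cons (a : p.A) (f : p.B a → p.M) (b : p.B a) :
      MPath p (f b) → MPath p (PFunctor.M.mk ⟨a, f⟩)

/-- The cofree comonad `c_q` on `q`, as a polynomial functor: positions are
`q`-behavior trees (the final coalgebra `q.M`), directions are finite paths. -/
def cofreePoly (q : PFunctor.{u, u}) : PFunctor.{u, u} := ⟨q.M, MPath q⟩

/-- The subtree of a behavior tree at the end of a finite path. -/
def subtreeAt {q : PFunctor.{u, u}} : ∀ {t : q.M}, MPath q t → q.M
  | _, .nil t => t
  | _, .cons _ _ _ pth => subtreeAt pth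

/-- Concatenation of paths. -/
def appendPath {q : PFunctor.{u, u}} :
    ∀ {t : q.M} (pth : MPath q t), MPath q (subtreeAt pth) → MPath q t
  | _, .nil _, s => s
  | _, .cons a f b pth, s => .cons a f b (appendPath pth s)

/-- The counit `ε : c_q → y` of the cofree comonad: the projection to `q^((0)) = y`,
sending the unique direction of `y` to the empty path. -/
def cofreeEps (q : PFunctor.{u, u}) : PolyHom (cofreePoly q) yPoly where
  onPos _ := PUnit.unit
  onDir t _ := .nil t

/-- The comultiplication `δ : c_q → c_q ◁ c_q` of the cofree comonad: a behavior tree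
is sent to itself together with all of its subtrees, and a pair of paths is sent to
their concatenation. -/
def cofreeDelta (q : PFunctor.{u, u}) :
    PolyHom (cofreePoly q) ((cofreePoly q).comp (cofreePoly q)) where
  onPos t := ⟨t, fun pth => subtreeAt pth⟩
  onDir t d := appendPath d.1 d.2

/-- Extensionality for `PolyHom` via `HEq` on directions. -/
theorem PolyHom.ext' {p q : PFunctor.{u, u}} {f g : PolyHom p q}
    (h1 : f.onPos = g.onPos) (h2 : ∀ a, HEq (f.onDir a) (g.onDir a)) : f = g := by
  cases f; cases g
  cases h1
  congr 1
  funext a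
  exact eq_of_heq (h2 a)

theorem appendPath_nil {q : PFunctor.{u, u}} :
    ∀ {t : q.M} (pth : MPath q t), appendPath pth (.nil (subtreeAt pth)) = pth
  | _, .nil t => rfl
  | _, .cons a f b pth => by
      show MPath.cons a f b (appendPath pth (MPath.nil (subtreeAt pth))) =
        MPath.cons a f b pth
      rw [appendPath_nil pth]

theorem subtreeAt_append {q : PFunctor.{u, u}} :
    ∀ {t : q.M} (a : MPath q t) (b : MPath q (subtreeAt a)),
      subtreeAt (appendPath a b) = subtreeAt b
  | _, .nil _, _ => rfl
  | _, .cons _ _ _ pth, b => subtreeAt_append pth b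

theorem appendPath_assoc {q : PFunctor.{u, u}} :
    ∀ {t : q.M} (a : MPath q t) (b : MPath q (subtreeAt a))
      (e : MPath q (subtreeAt (appendPath a b))) (e' : MPath q (subtreeAt b)),
      HEq e e' → appendPath (appendPath a b) e = appendPath a (appendPath b e')
  | _, .nil _, b, e, e', h => by
      cases h; rfl
  | _, .cons x f d pth, b, e, e', h => by
      show MPath.cons x f d (appendPath (appendPath pth b) e) =
        MPath.cons x f d (appendPath pth (appendPath b e'))
      rw [appendPath_assoc pth b e e' h]

theorem sigma_heq {α : Type u} {β γ : α → Type u} (h : ∀ a, β a = γ a)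
    {x : Sigma β} {y : Sigma γ} (hxy : HEq x y) : x.1 = y.1 ∧ HEq x.2 y.2 := by
  have hβ : β = γ := funext h
  subst hβ
  cases hxy
  exact ⟨rfl, HEq.rfl⟩

/-- For any polynomial functor `p`, the cofree comonad `c_p` (the
limit of the chain `p^((0)) = y`, `p^((1+i)) = y × (p ◁ p^((i)))`, concretely: behavior
trees and finite paths), equipped with the counit `ε : c_p → y` (the projection) and
the comultiplication `δ : c_p → c_p ◁ c_p`, is a `◁`-comonoid: counitality and
coassociativity hold. -/
theorem cofreePoly_comonoid (p : PFunctor.{u, u}) :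
    composePoly (cofreeDelta p)
        (composePoly (compHom (cofreeEps p) (idHom (cofreePoly p))) (lunitHom (cofreePoly p))) =
      idHom (cofreePoly p) ∧
    composePoly (cofreeDelta p)
        (composePoly (compHom (idHom (cofreePoly p)) (cofreeEps p)) (runitHom (cofreePoly p))) =
      idHom (cofreePoly p) ∧
    composePoly (composePoly (cofreeDelta p) (compHom (cofreeDelta p) (idHom (cofreePoly p))))
        (compAssocHom (cofreePoly p) (cofreePoly p) (cofreePoly p)) =
      composePoly (cofreeDelta p) (compHom (idHom (cofreePoly p)) (cofreeDelta p)) := by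
  refine ⟨?_, ?_, ?_⟩
  · -- left counit
    apply PolyHom.ext'
    case h1 => rfl
    intro t
    apply heq_of_eq
    funext d
    show appendPath (.nil t) d = d
    rfl
  · -- right counit
    apply PolyHom.ext'
    case h1 => rfl
    intro t
    apply heq_of_eq
    funext d
    show appendPath d (.nil (subtreeAt d)) = d
    exact appendPath_nil d
  · -- coassociativity
    show (⟨fun t => ⟨t, fun b => ⟨subtreeAt b, fun c => subtreeAt (appendPath b c)⟩⟩,
        fun t d => appendPath (appendPath d.1 d.2.1) d.2.2⟩ :
        PolyHom (cofreePoly p) ((cofreePoly p).comp ((cofreePoly p).comp (cofreePoly p)))) =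
      ⟨fun t => ⟨t, fun b => ⟨subtreeAt b, fun c => subtreeAt c⟩⟩,
        fun t d => appendPath d.1 (appendPath d.2.1 d.2.2)⟩
    have hfib : ∀ {t : p.M} (b : MPath p t),
        (fun c : MPath p (subtreeAt b) => MPath p (subtreeAt (appendPath b c))) =
          fun c => MPath p (subtreeAt c) :=
      fun b => funext fun c => by rw [subtreeAt_append]
    apply PolyHom.ext'
    · funext t
      show (⟨t, fun b => ⟨subtreeAt b, fun c => subtreeAt (appendPath b c)⟩⟩ :
          Σ a : p.M, MPath p a → Σ a' : p.M, MPath p a' → p.M) =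
        ⟨t, fun b => ⟨subtreeAt b, fun c => subtreeAt c⟩⟩
      congr 1
      funext b
      congr 1
      funext c
      exact subtreeAt_append b c
    · intro t
      dsimp only
      apply Function.hfunext
      · show ((b : MPath p t) × ((c : MPath p (subtreeAt b)) ×
            MPath p (subtreeAt (appendPath b c)))) =
          ((b : MPath p t) × ((c : MPath p (subtreeAt b)) × MPath p (subtreeAt c)))
        congr 1
        funext b
        exact congrArg Sigma (hfib b)
      · rintro ⟨b, c, e⟩ ⟨b', c', e'⟩ hd
        apply heq_of_eq
        obtain ⟨hb, h2⟩ := sigma_heq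
          (β := fun b : MPath p t =>
            (c : MPath p (subtreeAt b)) × MPath p (subtreeAt (appendPath b c)))
          (γ := fun b : MPath p t =>
            (c : MPath p (subtreeAt b)) × MPath p (subtreeAt c))
          (fun b => congrArg Sigma (hfib b)) hd
        dsimp at hb h2
        subst hb
        obtain ⟨hc, h3⟩ := sigma_heq
          (β := fun c : MPath p (subtreeAt b) => MPath p (subtreeAt (appendPath b c)))
          (γ := fun c : MPath p (subtreeAt b) => MPath p (subtreeAt c))
          (fun c => congrFun (hfib b) c) h2
        dsimp at hc h3
        subst hc
        exact appendPath_assoc b c e e' h3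
end

section
/- The cofree comonad functor c_− : Poly → Comon(Poly, ◁, y) is right adjoint to the forgetful functor U from ◁-comonoids to Poly: for every ◁-comonoid c and polynomial q, there is a natural bijection between comonoid maps c → c_q and polynomial maps U(c) → q. -/
universe u

/-- A `◁`-comonoid structure on a polynomial `c` (equivalently, a category). -/
structure ComonStr (c : PFunctor.{u, u}) : Type u where
  ε : PolyHom c yPoly
  δ : PolyHom c (c.comp c)
  left_counit :
    composePoly δ (composePoly (compHom ε (idHom c)) (lunitHom c)) = idHom c
  right_counit :
    composePoly δ (composePoly (compHom (idHom c) ε) (runitHom c)) = idHom c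
  coassoc :
    composePoly (composePoly δ (compHom δ (idHom c))) (compAssocHom c c c) =
      composePoly δ (compHom (idHom c) δ)

/-- A map of `◁`-comonoids (a cofunctor). -/
def IsPolyComonoidHom {c d : PFunctor.{u, u}} (mc : ComonStr c) (md : ComonStr d)
    (g : PolyHom c d) : Prop :=
  composePoly g md.ε = mc.ε ∧
    composePoly g md.δ = composePoly mc.δ (compHom g g)

/-- The counit of the cofree-comonad adjunction: the projection `c_q → q` reading off
the root of a behavior tree. -/
def cofreeCounit (q : PFunctor.{u, u}) : PolyHom (cofreePoly q) q where
  onPos t := (PFunctor.M.dest t).1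
  onDir t b :=
    cast (congrArg (MPath q) (PFunctor.M.mk_dest t))
      (MPath.cons (PFunctor.M.dest t).1 (PFunctor.M.dest t).2 b
        (MPath.nil ((PFunctor.M.dest t).2 b)))

namespace CofreeAux

open PFunctor

/-! ### Generic helpers -/

theorem hom_pos {p r : PFunctor.{u, u}} {φ ψ : PolyHom p r} (h : φ = ψ) (a : p.A) :
    φ.onPos a = ψ.onPos a := by rw [h]

theorem hom_dir {p r : PFunctor.{u, u}} {φ ψ : PolyHom p r} (h : φ = ψ) (a : p.A)
    (d : r.B (φ.onPos a)) :
    φ.onDir a d = ψ.onDir a (cast (congrArg (fun χ => r.B (PolyHom.onPos χ a)) h) d) := by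
  subst h; rfl

theorem polyHom_ext {p r : PFunctor.{u, u}} {φ ψ : PolyHom p r}
    (h1 : ∀ a, φ.onPos a = ψ.onPos a)
    (h2 : ∀ (a : p.A) (d : r.B (φ.onPos a)) (d' : r.B (ψ.onPos a)),
      HEq d d' → φ.onDir a d = ψ.onDir a d') : φ = ψ := by
  obtain ⟨P, D⟩ := φ; obtain ⟨P', D'⟩ := ψ
  obtain rfl : P = P' := funext h1
  have : D = D' := funext fun a => funext fun d => h2 a d d (HEq.refl d)
  rw [this]

theorem cast_f {α : Sort*} {P : α → Sort*} (f : ∀ a, P a) {x y : α} (h : x = y) :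
    cast (congrArg P h) (f x) = f y := by subst h; rfl

theorem mk_sigma_eq {α : Type u} {β : α → Type u} {x x' : α} {y : β x} {y' : β x'}
    (h : x = x') (h2 : HEq y y') : (⟨x, y⟩ : Σ a, β a) = ⟨x', y'⟩ := by
  subst h; cases h2; rfl

theorem fun_heq {α α' : Type u} {γ : Sort v} (h : α = α') {F : α → γ} {G : α' → γ}
    (hp : ∀ x : α, F x = G (cast h x)) : HEq F G := by
  subst h; exact heq_of_eq (funext fun x => hp x)

theorem sigma_fun_ext {α : Type u} {P : α → Type u} {γ : Type u}
    {x1 y1 : α} {F : P x1 → γ} {G : P y1 → γ}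
    (h : (⟨x1, F⟩ : Σ z, P z → γ) = ⟨y1, G⟩) (hfst : x1 = y1) (b : P y1) :
    F (cast (congrArg P hfst.symm) b) = G b := by
  subst hfst
  have h2 : HEq F G := by
    rw [Sigma.mk.inj_iff] at h
    exact h.2
  calc F (cast (congrArg P rfl) b) = F b := congrArg F (eq_of_heq (cast_heq _ b))
    _ = G b := congrFun (eq_of_heq h2) b

theorem cast_sigma_mk {A A' : Type u} {B : A → Type u} {B' : A' → Type u}
    (hA : A = A') (hB : ∀ z : A, B z = B' (cast hA z)) (PF : Sigma B = Sigma B')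
    (p1 : A) (p2 : B p1) :
    cast PF ⟨p1, p2⟩ = ⟨cast hA p1, cast (hB p1) p2⟩ := by
  subst hA
  obtain rfl : B = B' := funext fun z => hB z
  rfl

/-! ### Category laws from a comonoid structure -/

variable {c q : PFunctor.{u, u}}

section Cat
variable (mc : ComonStr c)

theorem d1 (a : c.A) : (mc.δ.onPos a).1 = a := hom_pos mc.right_counit a

def eB (a : c.A) : c.B a = c.B (mc.δ.onPos a).1 := congrArg c.B (d1 mc a).symm

def cod (a : c.A) (b : c.B a) : c.A := (mc.δ.onPos a).2 (cast (eB mc a) b)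

def cid (a : c.A) : c.B a := mc.ε.onDir a PUnit.unit

def cmp (a : c.A) (b : c.B a) (r : c.B (cod mc a b)) : c.B a :=
  mc.δ.onDir a ⟨cast (eB mc a) b, r⟩

theorem cmp_cid_right (a : c.A) (b : c.B a) : cmp mc a b (cid mc (cod mc a b)) = b := by
  have h := hom_dir mc.right_counit a (cast (eB mc a) b)
  refine h.trans ?_
  erw [cast_cast]
  rfl

theorem cod_cid (a : c.A) : cod mc a (cid mc a) = a := by
  have e1 : cast (eB mc a) (cid mc a) = cid mc ((mc.δ.onPos a).1) :=
    cast_f (cid mc) (d1 mc a).symm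
  have h2 := hom_pos mc.left_counit a
  calc cod mc a (cid mc a) = (mc.δ.onPos a).2 (cid mc ((mc.δ.onPos a).1)) := congrArg _ e1
    _ = a := h2

theorem cmp_cid_left (a : c.A) (r : c.B (cod mc a (cid mc a))) :
    cmp mc a (cid mc a) r = cast (congrArg c.B (cod_cid mc a)) r := by
  have e1 : cast (eB mc a) (cid mc a) = cid mc ((mc.δ.onPos a).1) :=
    cast_f (cid mc) (d1 mc a).symm
  have e2 : c.B (cod mc a (cid mc a))
      = c.B ((mc.δ.onPos a).2 (cid mc ((mc.δ.onPos a).1))) := by rw [cod, e1]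
  have h := hom_dir mc.left_counit a (cast e2 r)
  have hp : (⟨cast (eB mc a) (cid mc a), r⟩ :
      Σ u : c.B (mc.δ.onPos a).1, c.B ((mc.δ.onPos a).2 u)) =
      ⟨cid mc ((mc.δ.onPos a).1), cast e2 r⟩ :=
    mk_sigma_eq e1 (cast_heq e2 r).symm
  calc cmp mc a (cid mc a) r = mc.δ.onDir a ⟨cid mc ((mc.δ.onPos a).1), cast e2 r⟩ :=
        congrArg _ hp
    _ = _ := by refine h.trans ?_; erw [cast_cast]; rfl

end Cat

end CofreeAux
namespace CofreeAux
variable {c q : PFunctor.{u, u}}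
section Cat2
variable (mc : ComonStr c)

theorem hom_dir_heq {p r : PFunctor.{u, u}} {φ ψ : PolyHom p r} (h : φ = ψ) (a : p.A)
    {d : r.B (φ.onPos a)} {d' : r.B (ψ.onPos a)} (hd : HEq d d') :
    φ.onDir a d = ψ.onDir a d' := by subst h; rw [eq_of_heq hd]

theorem cod_congr {a a' : c.A} (h : a = a') (b : c.B a) :
    cod mc a' (cast (congrArg c.B h) b) = cod mc a b := by subst h; rfl

theorem cmp_congr {a a' : c.A} (h : a = a') (b : c.B a) (r : c.B (cod mc a b)) :
    cmp mc a' (cast (congrArg c.B h) b) (cast (congrArg c.B (cod_congr mc h b)).symm r)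
      = cast (congrArg c.B h) (cmp mc a b r) := by subst h; rfl

theorem CApos (a : c.A) (b : c.B ((mc.δ.onPos a).1)) :
    (⟨cod mc ((mc.δ.onPos a).1) b,
      fun cc => (mc.δ.onPos a).2 (cmp mc ((mc.δ.onPos a).1) b cc)⟩ :
        Σ z : c.A, c.B z → c.A)
      = mc.δ.onPos ((mc.δ.onPos a).2 b) :=
  sigma_fun_ext (hom_pos mc.coassoc a) (d1 mc ((mc.δ.onPos a).1)) b

theorem codf (a : c.A) (b : c.B ((mc.δ.onPos a).1)) :
    cod mc ((mc.δ.onPos a).1) b = (mc.δ.onPos a).2 b := by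
  have h := congrArg Sigma.fst (CApos mc a b)
  exact h.trans (d1 mc ((mc.δ.onPos a).2 b))

theorem hfst2 (a : c.A) (b : c.B ((mc.δ.onPos a).1)) :
    cod mc ((mc.δ.onPos a).1) b = (mc.δ.onPos ((mc.δ.onPos a).2 b)).1 :=
  (codf mc a b).trans (d1 mc ((mc.δ.onPos a).2 b)).symm

theorem CAposSnd (a : c.A) (b : c.B ((mc.δ.onPos a).1))
    (cc : c.B ((mc.δ.onPos ((mc.δ.onPos a).2 b)).1)) :
    (mc.δ.onPos a).2 (cmp mc ((mc.δ.onPos a).1) b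
        (cast (congrArg c.B (hfst2 mc a b).symm) cc))
      = (mc.δ.onPos ((mc.δ.onPos a).2 b)).2 cc :=
  sigma_fun_ext (CApos mc a b) (hfst2 mc a b) cc

end Cat2
end CofreeAux
namespace CofreeAux
variable {c q : PFunctor.{u, u}}

theorem cast_heq_cast {α β β' : Sort u} (h : α = β) (h' : α = β') (x : α) :
    HEq (cast h x) (cast h' x) := (cast_heq h x).trans (cast_heq h' x).symm

section Cat3
variable (mc : ComonStr c)

theorem cod_cmp (a : c.A) (b : c.B a) (r : c.B (cod mc a b)) :
    cod mc a (cmp mc a b r) = cod mc (cod mc a b) r := by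
  have hc := cmp_congr mc (d1 mc a).symm b r
  have key := CAposSnd mc a (cast (congrArg c.B (d1 mc a).symm) b)
      (cast (congrArg c.B ((cod_congr mc (d1 mc a).symm b).symm.trans
        (hfst2 mc a (cast (congrArg c.B (d1 mc a).symm) b)))) r)
  rw [cast_cast] at key
  refine Eq.trans ?_ key
  exact congrArg (mc.δ.onPos a).2 hc.symm

end Cat3
end CofreeAux
namespace CofreeAux
variable {c q : PFunctor.{u, u}}

theorem cast_roundtrip {α β : Sort u} (h : α = β) (h' : β = α) (x : α) :
    cast h' (cast h x) = x := by subst h; rfl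

theorem sigma_mk_heq {α α' : Type u} {P : α → Type u} {P' : α' → Type u}
    {x : α} {x' : α'} {y : P x} {y' : P' x'}
    (h1 : α = α') (h2 : HEq P P') (h3 : HEq x x') (h4 : HEq y y') :
    HEq (⟨x, y⟩ : Σ z, P z) (⟨x', y'⟩ : Σ z, P' z) := by
  subst h1; cases h2; cases h3; cases h4; rfl

theorem sigma_type_congr {A A' : Type u} {B : A → Type u} {B' : A' → Type u}
    (hA : A = A') (hB : ∀ z, B z = B' (cast hA z)) : Sigma B = Sigma B' := by
  subst hA
  obtain rfl : B = B' := funext fun z => hB z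
  rfl

section Cat4
variable (mc : ComonStr c)

theorem cmp_assoc (a : c.A) (b : c.B a) (r : c.B (cod mc a b))
    (s : c.B (cod mc (cod mc a b) r)) :
    cmp mc a b (cmp mc (cod mc a b) r s)
      = cmp mc a (cmp mc a b r) (cast (congrArg c.B (cod_cmp mc a b r).symm) s) := by
  set a1 := (mc.δ.onPos a).1 with ha1
  have hT1 : c.B ((mc.δ.onPos a1).1) = c.B a1 := congrArg c.B (d1 mc a1)
  set b1 : c.B a1 := cast (congrArg c.B (d1 mc a).symm) b with hb1
  set u : c.B ((mc.δ.onPos a1).1) := cast hT1.symm b1 with hu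
  set cc : c.B ((mc.δ.onPos a1).2 u) :=
    cast (congrArg c.B (cod_congr mc (d1 mc a).symm b)).symm r with hcc0
  have E1 : mc.δ.onDir a1 ⟨u, cc⟩ = cast (congrArg c.B (d1 mc a).symm) (cmp mc a b r) :=
    cmp_congr mc (d1 mc a).symm b r
  have DD : c.B (cod mc (cod mc a b) r)
      = c.B ((mc.δ.onPos a).2 (mc.δ.onDir a1 ⟨u, cc⟩)) := by
    rw [E1]; exact congrArg c.B (cod_cmp mc a b r).symm
  set dd := cast DD s with hdd0
  have Ecast : c.B (cod mc a b) = c.B ((mc.δ.onPos ((mc.δ.onPos a).2 b1)).1) :=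
    congrArg c.B ((cod_congr mc (d1 mc a).symm b).symm.trans (hfst2 mc a b1))
  -- pointwise type equality for the generic second component
  have hA2 : ∀ u0 : c.B ((mc.δ.onPos a1).1),
      c.B ((mc.δ.onPos a1).2 u0) = c.B ((mc.δ.onPos ((mc.δ.onPos a).2 (cast hT1 u0))).1) := by
    intro u0
    have e0 : (mc.δ.onPos a1).2 u0 = cod mc a1 (cast hT1 u0) :=
      (congrArg (mc.δ.onPos a1).2 (cast_roundtrip hT1 (eB mc a1) u0)).symm
    exact congrArg c.B (e0.trans (hfst2 mc a (cast hT1 u0)))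
  have hB2 : ∀ (u0 : c.B ((mc.δ.onPos a1).1)) (cc0 : c.B ((mc.δ.onPos a1).2 u0)),
      c.B ((mc.δ.onPos a).2 (mc.δ.onDir a1 ⟨u0, cc0⟩))
        = c.B ((mc.δ.onPos ((mc.δ.onPos a).2 (cast hT1 u0))).2 (cast (hA2 u0) cc0)) := by
    intro u0 cc0
    have pair : (⟨u0, cc0⟩ : Σ z : c.B ((mc.δ.onPos a1).1), c.B ((mc.δ.onPos a1).2 z))
        = ⟨cast (eB mc a1) (cast hT1 u0),
            cast (congrArg c.B (hfst2 mc a (cast hT1 u0)).symm) (cast (hA2 u0) cc0)⟩ :=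
      mk_sigma_eq (cast_roundtrip hT1 (eB mc a1) u0).symm
        ((cast_heq _ _).trans (cast_heq _ _)).symm
    calc c.B ((mc.δ.onPos a).2 (mc.δ.onDir a1 ⟨u0, cc0⟩))
        = c.B ((mc.δ.onPos a).2 (cmp mc a1 (cast hT1 u0)
            (cast (congrArg c.B (hfst2 mc a (cast hT1 u0)).symm) (cast (hA2 u0) cc0)))) := by
          rw [pair]; rfl
      _ = c.B ((mc.δ.onPos ((mc.δ.onPos a).2 (cast hT1 u0))).2 (cast (hA2 u0) cc0)) :=
          congrArg c.B (CAposSnd mc a (cast hT1 u0) (cast (hA2 u0) cc0))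
  -- HEq between the two full direction triples
  have hA3 : c.B ((mc.δ.onPos a1).2 u) = c.B ((mc.δ.onPos ((mc.δ.onPos a).2 b1)).1) :=
    congrArg c.B (hfst2 mc a b1)
  have hP3 : HEq (fun cc0 : c.B ((mc.δ.onPos a1).2 u) =>
        c.B ((mc.δ.onPos a).2 (mc.δ.onDir a1 ⟨u, cc0⟩)))
      (fun cc0 : c.B ((mc.δ.onPos ((mc.δ.onPos a).2 b1)).1) =>
        c.B ((mc.δ.onPos ((mc.δ.onPos a).2 b1)).2 cc0)) := by
    refine fun_heq hA3 fun cc0 => ?_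
    have rt : cast (congrArg c.B (hfst2 mc a b1).symm) (cast hA3 cc0) = cc0 :=
      cast_roundtrip hA3 (congrArg c.B (hfst2 mc a b1).symm) cc0
    calc c.B ((mc.δ.onPos a).2 (mc.δ.onDir a1 ⟨u, cc0⟩))
        = c.B ((mc.δ.onPos a).2 (cmp mc a1 b1
            (cast (congrArg c.B (hfst2 mc a b1).symm) (cast hA3 cc0)))) := by rw [rt]; rfl
      _ = c.B ((mc.δ.onPos ((mc.δ.onPos a).2 b1)).2 (cast hA3 cc0)) :=
          congrArg c.B (CAposSnd mc a b1 (cast hA3 cc0))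
  have hy : HEq (⟨cc, dd⟩ : Σ cc0 : c.B ((mc.δ.onPos a1).2 u),
        c.B ((mc.δ.onPos a).2 (mc.δ.onDir a1 ⟨u, cc0⟩)))
      (⟨cast Ecast r, s⟩ : Σ cc0 : c.B ((mc.δ.onPos ((mc.δ.onPos a).2 b1)).1),
        c.B ((mc.δ.onPos ((mc.δ.onPos a).2 b1)).2 cc0)) :=
    sigma_mk_heq hA3 hP3 (cast_heq_cast _ Ecast r) (cast_heq DD s)
  have hT2 : HEq (fun u0 : c.B ((mc.δ.onPos a1).1) =>
        Σ cc0 : c.B ((mc.δ.onPos a1).2 u0),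
          c.B ((mc.δ.onPos a).2 (mc.δ.onDir a1 ⟨u0, cc0⟩)))
      (fun u0' : c.B a1 =>
        Σ cc0 : c.B ((mc.δ.onPos ((mc.δ.onPos a).2 u0')).1),
          c.B ((mc.δ.onPos ((mc.δ.onPos a).2 u0')).2 cc0)) := by
    refine fun_heq hT1 fun u0 => ?_
    exact sigma_type_congr (hA2 u0) (hB2 u0)
  have hd : HEq (⟨u, cc, dd⟩ : Σ u0 : c.B ((mc.δ.onPos a1).1),
        Σ cc0 : c.B ((mc.δ.onPos a1).2 u0),
          c.B ((mc.δ.onPos a).2 (mc.δ.onDir a1 ⟨u0, cc0⟩)))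
      (⟨b1, cast Ecast r, s⟩ : Σ u0' : c.B a1,
        Σ cc0 : c.B ((mc.δ.onPos ((mc.δ.onPos a).2 u0')).1),
          c.B ((mc.δ.onPos ((mc.δ.onPos a).2 u0')).2 cc0)) :=
    sigma_mk_heq hT1 hT2 (cast_heq _ b1) hy
  have main := hom_dir_heq mc.coassoc a hd
  exact main.symm.trans (congrArg (mc.δ.onDir a)
    (mk_sigma_eq E1 (cast_heq_cast DD (congrArg c.B (cod_cmp mc a b r).symm) s)))

end Cat4
end CofreeAux
namespace CofreeAux
variable {c q : PFunctor.{u, u}}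

section Build
variable (mc : ComonStr c) (φ : PolyHom c q)

def step (a : c.A) (d : q.B (φ.onPos a)) : c.A := cod mc a (φ.onDir a d)

def tree : c.A → q.M := PFunctor.M.corec (fun a => ⟨φ.onPos a, step mc φ a⟩)

theorem dest_tree (a : c.A) : PFunctor.M.dest (tree mc φ a)
    = ⟨φ.onPos a, fun d => tree mc φ (step mc φ a d)⟩ := by
  show PFunctor.M.dest (PFunctor.M.corec _ a) = _
  erw [PFunctor.M.dest_corec]
  rfl

theorem tree_inj_pos {a : c.A} {a0 : q.A} {f0 : q.B a0 → q.M}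
    (h : tree mc φ a = PFunctor.M.mk ⟨a0, f0⟩) : a0 = φ.onPos a := by
  have h2 := congrArg (fun t => (PFunctor.M.dest t).1) h
  simp only [PFunctor.M.dest_mk, dest_tree] at h2
  exact h2.symm

theorem tree_inj_f {a : c.A} {a0 : q.A} {f0 : q.B a0 → q.M}
    (h : tree mc φ a = PFunctor.M.mk ⟨a0, f0⟩) (d : q.B a0) :
    tree mc φ (step mc φ a (cast (congrArg q.B (tree_inj_pos mc φ h)) d)) = f0 d := by
  have h2 : (⟨φ.onPos a, fun d => tree mc φ (step mc φ a d)⟩ : Σ z : q.A, q.B z → q.M)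
      = ⟨a0, f0⟩ := by
    rw [← dest_tree, h]; erw [PFunctor.M.dest_mk]
  exact sigma_fun_ext h2 (tree_inj_pos mc φ h).symm d

def pathToDir : ∀ {t : q.M}, MPath q t → ∀ a : c.A, tree mc φ a = t → c.B a
  | _, .nil _, a, _ => cid mc a
  | _, .cons a0 f0 d pth, a, h =>
      cmp mc a (φ.onDir a (cast (congrArg q.B (tree_inj_pos mc φ h)) d))
        (pathToDir pth (step mc φ a (cast (congrArg q.B (tree_inj_pos mc φ h)) d))
          (tree_inj_f mc φ h d))

theorem pathToDir_congr {t : q.M} (pth : MPath q t) {a a' : c.A} (ha : a = a')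
    (h : tree mc φ a = t) (h' : tree mc φ a' = t) :
    pathToDir mc φ pth a' h' = cast (congrArg c.B ha) (pathToDir mc φ pth a h) := by
  subst ha; rfl

theorem pathToDir_cast {t t' : q.M} (ht : t = t') (pth : MPath q t) (a : c.A)
    (h : tree mc φ a = t') (h2 : tree mc φ a = t) :
    pathToDir mc φ (cast (congrArg (MPath q) ht) pth) a h = pathToDir mc φ pth a h2 := by
  subst ht; rfl

theorem subtreeAt_cast {t t' : q.M} (ht : t = t') (pth : MPath q t) :
    subtreeAt (cast (congrArg (MPath q) ht) pth) = subtreeAt pth := by subst ht; rfl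

theorem subtree_eq : ∀ {t : q.M} (pth : MPath q t) (a : c.A) (h : tree mc φ a = t),
    subtreeAt pth = tree mc φ (cod mc a (pathToDir mc φ pth a h))
  | _, .nil t, a, h => by
      show t = _
      rw [pathToDir, cod_cid]
      exact h.symm
  | _, .cons a0 f0 d pth, a, h => by
      have ih := subtree_eq pth
        (step mc φ a (cast (congrArg q.B (tree_inj_pos mc φ h)) d)) (tree_inj_f mc φ h d)
      show subtreeAt pth = _
      rw [ih]
      exact congrArg (tree mc φ)
        (cod_cmp mc a (φ.onDir a (cast (congrArg q.B (tree_inj_pos mc φ h)) d)) _).symm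

theorem pathToDir_append :
    ∀ {t : q.M} (pth1 : MPath q t) (pth2 : MPath q (subtreeAt pth1)) (a : c.A)
      (h : tree mc φ a = t),
    pathToDir mc φ (appendPath pth1 pth2) a h
      = cmp mc a (pathToDir mc φ pth1 a h)
          (pathToDir mc φ pth2 (cod mc a (pathToDir mc φ pth1 a h))
            (subtree_eq mc φ pth1 a h).symm)
  | _, .nil t, pth2, a, h => by
      have hc := pathToDir_congr mc φ pth2 (cod_cid mc a).symm h
        (subtree_eq mc φ (.nil t) a h).symm
      refine Eq.symm ?_
      refine Eq.trans (congrArg (cmp mc a (cid mc a)) hc) ?_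
      rw [cmp_cid_left, cast_roundtrip]
      rfl
  | _, .cons a0 f0 d pth, pth2, a, h => by
      have ih := pathToDir_append pth pth2
        (step mc φ a (cast (congrArg q.B (tree_inj_pos mc φ h)) d)) (tree_inj_f mc φ h d)
      have e2 := (pathToDir_congr mc φ pth2
        (cod_cmp mc a (φ.onDir a (cast (congrArg q.B (tree_inj_pos mc φ h)) d))
          (pathToDir mc φ pth
            (step mc φ a (cast (congrArg q.B (tree_inj_pos mc φ h)) d))
            (tree_inj_f mc φ h d))).symm
        (subtree_eq mc φ pth
          (step mc φ a (cast (congrArg q.B (tree_inj_pos mc φ h)) d))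
          (tree_inj_f mc φ h d)).symm
        (subtree_eq mc φ (.cons a0 f0 d pth) a h).symm).symm
      exact (congrArg
          (cmp mc a (φ.onDir a (cast (congrArg q.B (tree_inj_pos mc φ h)) d))) ih).trans
        ((cmp_assoc mc a (φ.onDir a (cast (congrArg q.B (tree_inj_pos mc φ h)) d))
            (pathToDir mc φ pth
              (step mc φ a (cast (congrArg q.B (tree_inj_pos mc φ h)) d))
              (tree_inj_f mc φ h d))
            (pathToDir mc φ pth2
              (cod mc (step mc φ a (cast (congrArg q.B (tree_inj_pos mc φ h)) d))
                (pathToDir mc φ pth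
                  (step mc φ a (cast (congrArg q.B (tree_inj_pos mc φ h)) d))
                  (tree_inj_f mc φ h d)))
              (subtree_eq mc φ pth
                (step mc φ a (cast (congrArg q.B (tree_inj_pos mc φ h)) d))
                (tree_inj_f mc φ h d)).symm)).trans
          (congrArg (cmp mc a _) e2))

end Build
end CofreeAux
namespace CofreeAux
variable {c q : PFunctor.{u, u}}

theorem sigma_heq_elim {α α' : Type u} {P : α → Type u} {P' : α' → Type u}
    {x : α} {x' : α'} {y : P x} {y' : P' x'}
    (hα : α = α') (hP : HEq P P')
    (h : HEq (⟨x, y⟩ : Σ z, P z) (⟨x', y'⟩ : Σ z, P' z)) :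
    HEq x x' ∧ HEq y y' := by
  subst hα; cases hP
  have h2 := eq_of_heq h
  injection h2 with h3 h4
  exact ⟨heq_of_eq h3, h4⟩

section Build2
variable (mc : ComonStr c) (φ : PolyHom c q)

def buildHom : PolyHom c (cofreePoly q) :=
  ⟨tree mc φ, fun a pth => pathToDir mc φ pth a rfl⟩

theorem pathToDir_heq {t t' : q.M} (ht : t = t') (pth : MPath q t) {a a' : c.A}
    (ha : a = a') (h : tree mc φ a = t) (h' : tree mc φ a' = t') :
    HEq (pathToDir mc φ pth a h)
      (pathToDir mc φ (cast (congrArg (MPath q) ht) pth) a' h') := by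
  subst ht; subst ha; rfl

theorem build_eps : composePoly (buildHom mc φ) (cofreeEps q) = mc.ε := by
  refine polyHom_ext (fun a => rfl) (fun a d d' hd => ?_)
  show cid mc a = mc.ε.onDir a d'
  exact congrArg (mc.ε.onDir a) rfl

theorem key_pos (a : c.A) (pth : MPath q (tree mc φ a)) :
    subtreeAt pth = tree mc φ ((mc.δ.onPos a).2 (pathToDir mc φ
      (cast (congrArg (MPath q) (congrArg (tree mc φ) (d1 mc a).symm)) pth)
      ((mc.δ.onPos a).1) rfl)) := by
  have e1 := pathToDir_cast mc φ (congrArg (tree mc φ) (d1 mc a).symm) pth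
    ((mc.δ.onPos a).1) rfl (congrArg (tree mc φ) (d1 mc a))
  have e2 := pathToDir_congr mc φ pth (d1 mc a).symm rfl (congrArg (tree mc φ) (d1 mc a))
  refine (subtree_eq mc φ pth a rfl).trans ?_
  exact congrArg (fun z => tree mc φ ((mc.δ.onPos a).2 z)) (e2.symm.trans e1.symm)

theorem build_delta :
    composePoly (buildHom mc φ) (cofreeDelta q)
      = composePoly mc.δ (compHom (buildHom mc φ) (buildHom mc φ)) := by
  have hfam : ∀ a : c.A, HEq
      (fun pth : MPath q (tree mc φ a) => subtreeAt pth)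
      (fun pth : MPath q (tree mc φ ((mc.δ.onPos a).1)) =>
        tree mc φ ((mc.δ.onPos a).2 (pathToDir mc φ pth ((mc.δ.onPos a).1) rfl))) := by
    intro a
    exact fun_heq (congrArg (fun z => MPath q (tree mc φ z)) (d1 mc a).symm)
      (fun pth => key_pos mc φ a pth)
  refine polyHom_ext (fun a => ?_) (fun a dd dd' hdd => ?_)
  · exact mk_sigma_eq (congrArg (tree mc φ) (d1 mc a).symm) (hfam a)
  · obtain ⟨p1, p2⟩ := dd
    obtain ⟨p1', p2'⟩ := dd'
    have hα : MPath q (tree mc φ a) = MPath q (tree mc φ ((mc.δ.onPos a).1)) :=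
      congrArg (fun z => MPath q (tree mc φ z)) (d1 mc a).symm
    have hP : HEq
        (fun pth : MPath q (tree mc φ a) => MPath q (subtreeAt pth))
        (fun pth : MPath q (tree mc φ ((mc.δ.onPos a).1)) =>
          MPath q (tree mc φ ((mc.δ.onPos a).2
            (pathToDir mc φ pth ((mc.δ.onPos a).1) rfl)))) := by
      refine fun_heq hα fun pth => ?_
      exact congrArg (MPath q) (key_pos mc φ a pth)
    obtain ⟨hx, hy⟩ := sigma_heq_elim hα hP hdd
    have hp1 : cast hα p1 = p1' := eq_of_heq ((cast_heq hα p1).trans hx)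
    subst hp1
    have hp2 : cast (congrArg (MPath q) (key_pos mc φ a p1)) p2 = p2' :=
      eq_of_heq ((cast_heq _ p2).trans hy)
    subst hp2
    -- Left side: pathToDir of the appended path; use Lemma B
    have hL := pathToDir_append mc φ p1 p2 a rfl
    refine hL.trans ?_
    -- Right side components
    have E1 : pathToDir mc φ (cast hα p1) ((mc.δ.onPos a).1) rfl
        = cast (congrArg c.B (d1 mc a).symm) (pathToDir mc φ p1 a rfl) := by
      have e1 := pathToDir_cast mc φ (congrArg (tree mc φ) (d1 mc a).symm) p1
        ((mc.δ.onPos a).1) rfl (congrArg (tree mc φ) (d1 mc a))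
      have e2 := pathToDir_congr mc φ p1 (d1 mc a).symm rfl
        (congrArg (tree mc φ) (d1 mc a))
      exact e1.trans e2
    have EY2 : HEq
        (pathToDir mc φ p2 (cod mc a (pathToDir mc φ p1 a rfl))
          (subtree_eq mc φ p1 a rfl).symm)
        (pathToDir mc φ (cast (congrArg (MPath q) (key_pos mc φ a p1)) p2)
          ((mc.δ.onPos a).2 (pathToDir mc φ (cast hα p1) ((mc.δ.onPos a).1) rfl)) rfl) := by
      refine pathToDir_heq mc φ (key_pos mc φ a p1) p2 ?_ _ _
      exact (congrArg (mc.δ.onPos a).2 E1).symm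
    exact (congrArg (mc.δ.onDir a) (mk_sigma_eq E1.symm EY2)).symm.symm
      |>.symm ▸ rfl

theorem build_counit : composePoly (buildHom mc φ) (cofreeCounit q) = φ := by
  refine polyHom_ext (fun a => congrArg Sigma.fst (dest_tree mc φ a)) (fun a d d' hd => ?_)
  have e1 := pathToDir_cast mc φ (PFunctor.M.mk_dest (tree mc φ a))
    (MPath.cons (PFunctor.M.dest (tree mc φ a)).1 (PFunctor.M.dest (tree mc φ a)).2 d
      (MPath.nil ((PFunctor.M.dest (tree mc φ a)).2 d)))
    a rfl (PFunctor.M.mk_dest (tree mc φ a)).symm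
  refine e1.trans ?_
  refine (cmp_cid_right mc a (φ.onDir a (cast (congrArg q.B
    (tree_inj_pos mc φ (PFunctor.M.mk_dest (tree mc φ a)).symm)) d))).trans ?_
  exact congrArg (φ.onDir a) (eq_of_heq ((cast_heq _ d).trans hd))

end Build2
end CofreeAux
namespace CofreeAux
variable {c q : PFunctor.{u, u}}

theorem appendPath_cast {t t' : q.M} (ht : t = t') (p1 : MPath q t)
    (p2 : MPath q (subtreeAt (cast (congrArg (MPath q) ht) p1))) :
    appendPath (cast (congrArg (MPath q) ht) p1) p2
      = cast (congrArg (MPath q) ht)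
          (appendPath p1 (cast (congrArg (MPath q) (subtreeAt_cast ht p1)) p2)) := by
  subst ht; rfl

theorem cons_nil_heq {x y : Σ z : q.A, q.B z → q.M} (h : x = y)
    {d : q.B x.1} {d' : q.B y.1} (hd : HEq d d') :
    HEq (MPath.cons x.1 x.2 d (MPath.nil (x.2 d)))
      (MPath.cons y.1 y.2 d' (MPath.nil (y.2 d'))) := by
  subst h; cases eq_of_heq hd; rfl

section Uniq
variable (mc : ComonStr c) (g : PolyHom c (cofreePoly q))

theorem gdir_congr {a a' : c.A} (h : a = a') (pth : MPath q (g.onPos a)) :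
    g.onDir a' (cast (congrArg (fun z => MPath q (g.onPos z)) h) pth)
      = cast (congrArg c.B h) (g.onDir a pth) := by subst h; rfl

theorem gdir_heq {a a' : c.A} (ha : a = a') {x : MPath q (g.onPos a)}
    {x' : MPath q (g.onPos a')} (hx : HEq x x') : HEq (g.onDir a x) (g.onDir a' x') := by
  subst ha; cases eq_of_heq hx; rfl

theorem subtree_g (hD : composePoly g (cofreeDelta q) = composePoly mc.δ (compHom g g))
    (a : c.A) (z : MPath q (g.onPos a)) :
    subtreeAt z = g.onPos ((mc.δ.onPos a).2 (g.onDir ((mc.δ.onPos a).1)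
      (cast (congrArg (fun w => MPath q (g.onPos w)) (d1 mc a).symm) z))) := by
  have h := sigma_fun_ext (hom_pos hD a) (congrArg g.onPos (d1 mc a).symm)
    (cast (congrArg (fun w => MPath q (g.onPos w)) (d1 mc a).symm) z)
  erw [cast_roundtrip] at h; exact h

theorem child (hD : composePoly g (cofreeDelta q) = composePoly mc.δ (compHom g g))
    (a : c.A) (d : q.B ((composePoly g (cofreeCounit q)).onPos a)) :
    (PFunctor.M.dest (g.onPos a)).2 d
      = g.onPos (step mc (composePoly g (cofreeCounit q)) a d) := by
  have h := subtree_g mc g hD a ((cofreeCounit q).onDir (g.onPos a) d)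
  exact ((subtreeAt_cast (PFunctor.M.mk_dest (g.onPos a))
      (MPath.cons (PFunctor.M.dest (g.onPos a)).1 (PFunctor.M.dest (g.onPos a)).2 d
        (MPath.nil ((PFunctor.M.dest (g.onPos a)).2 d)))).symm.trans
    (h.trans (congrArg (fun z => g.onPos ((mc.δ.onPos a).2 z))
      (gdir_congr g (d1 mc a).symm ((cofreeCounit q).onDir (g.onPos a) d)))))

theorem uniq_pos (hD : composePoly g (cofreeDelta q) = composePoly mc.δ (compHom g g))
    (a : c.A) : g.onPos a = tree mc (composePoly g (cofreeCounit q)) a := by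
  refine PFunctor.M.bisim
    (fun x y => ∃ a, x = g.onPos a ∧ y = tree mc (composePoly g (cofreeCounit q)) a)
    ?_ _ _ ⟨a, rfl, rfl⟩
  rintro x y ⟨a, rfl, rfl⟩
  refine ⟨(composePoly g (cofreeCounit q)).onPos a, (PFunctor.M.dest (g.onPos a)).2,
    fun d => tree mc (composePoly g (cofreeCounit q))
      (step mc (composePoly g (cofreeCounit q)) a d),
    rfl, dest_tree mc (composePoly g (cofreeCounit q)) a, ?_⟩
  intro i
  exact ⟨step mc (composePoly g (cofreeCounit q)) a i, child mc g hD a i, rfl⟩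

theorem uniq_dir (hE : composePoly g (cofreeEps q) = mc.ε)
    (hD : composePoly g (cofreeDelta q) = composePoly mc.δ (compHom g g)) :
    ∀ {t : q.M} (pth : MPath q t) (a : c.A) (hgt : g.onPos a = t)
      (h2 : tree mc (composePoly g (cofreeCounit q)) a = t),
    g.onDir a (cast (congrArg (MPath q) hgt.symm) pth)
      = pathToDir mc (composePoly g (cofreeCounit q)) pth a h2
  | _, .nil t, a, hgt, h2 => by
      subst hgt
      exact hom_dir hE a PUnit.unit
  | _, .cons a0 f0 d pth, a, hgt, h2 => by
      have hdest : PFunctor.M.dest (g.onPos a) = ⟨a0, f0⟩ := by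
        rw [hgt]; erw [PFunctor.M.dest_mk]
      have hA : MPath q (g.onPos a) = MPath q (g.onPos ((mc.δ.onPos a).1)) :=
        congrArg (fun w => MPath q (g.onPos w)) (d1 mc a).symm
      have key := hom_dir hD a
        (⟨cast (congrArg (MPath q) hgt.symm) (MPath.cons a0 f0 d (MPath.nil (f0 d))),
          cast (congrArg (MPath q)
            (subtreeAt_cast hgt.symm (MPath.cons a0 f0 d (MPath.nil (f0 d)))).symm) pth⟩ :
          Σ p1 : MPath q (g.onPos a), MPath q (subtreeAt p1))
      erw [cast_sigma_mk hA (fun z => congrArg (MPath q) (subtree_g mc g hD a z))] at key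
      have happ : appendPath
            (cast (congrArg (MPath q) hgt.symm) (MPath.cons a0 f0 d (MPath.nil (f0 d))))
            (cast (congrArg (MPath q)
              (subtreeAt_cast hgt.symm (MPath.cons a0 f0 d (MPath.nil (f0 d)))).symm) pth)
          = cast (congrArg (MPath q) hgt.symm) (MPath.cons a0 f0 d pth) := by
        rw [appendPath_cast hgt.symm]; erw [cast_roundtrip]
        rfl
      have hP1c : cast (congrArg (MPath q) hgt.symm) (MPath.cons a0 f0 d (MPath.nil (f0 d)))
          = (cofreeCounit q).onDir (g.onPos a)
              (cast (congrArg q.B (congrArg Sigma.fst hdest).symm) d) :=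
        eq_of_heq ((cast_heq _ _).trans
          ((cons_nil_heq hdest.symm (cast_heq _ d).symm).trans (cast_heq _ _).symm))
      have EZ1 : g.onDir ((mc.δ.onPos a).1)
            (cast hA (cast (congrArg (MPath q) hgt.symm)
              (MPath.cons a0 f0 d (MPath.nil (f0 d)))))
          = cast (congrArg c.B (d1 mc a).symm)
              ((composePoly g (cofreeCounit q)).onDir a
                (cast (congrArg q.B (congrArg Sigma.fst hdest).symm) d)) :=
        (gdir_congr g (d1 mc a).symm _).trans
          (congrArg (cast (congrArg c.B (d1 mc a).symm)) (congrArg (g.onDir a) hP1c))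
      have hgt2 : g.onPos (step mc (composePoly g (cofreeCounit q)) a
            (cast (congrArg q.B
              (tree_inj_pos mc (composePoly g (cofreeCounit q)) h2)) d)) = f0 d :=
        (uniq_pos mc g hD _).trans (tree_inj_f mc (composePoly g (cofreeCounit q)) h2 d)
      have ih := uniq_dir hE hD pth
        (step mc (composePoly g (cofreeCounit q)) a
          (cast (congrArg q.B (tree_inj_pos mc (composePoly g (cofreeCounit q)) h2)) d))
        hgt2 (tree_inj_f mc (composePoly g (cofreeCounit q)) h2 d)
      have ha2 : (mc.δ.onPos a).2 (g.onDir ((mc.δ.onPos a).1)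
            (cast hA (cast (congrArg (MPath q) hgt.symm)
              (MPath.cons a0 f0 d (MPath.nil (f0 d))))))
          = step mc (composePoly g (cofreeCounit q)) a
              (cast (congrArg q.B
                (tree_inj_pos mc (composePoly g (cofreeCounit q)) h2)) d) :=
        congrArg (mc.δ.onPos a).2 EZ1
      have hZ2 : HEq
          (g.onDir ((mc.δ.onPos a).2 (g.onDir ((mc.δ.onPos a).1)
              (cast hA (cast (congrArg (MPath q) hgt.symm)
                (MPath.cons a0 f0 d (MPath.nil (f0 d)))))))
            (cast (congrArg (MPath q) (subtree_g mc g hD a _))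
              (cast (congrArg (MPath q)
                (subtreeAt_cast hgt.symm (MPath.cons a0 f0 d (MPath.nil (f0 d)))).symm) pth)))
          (pathToDir mc (composePoly g (cofreeCounit q)) pth
            (step mc (composePoly g (cofreeCounit q)) a
              (cast (congrArg q.B
                (tree_inj_pos mc (composePoly g (cofreeCounit q)) h2)) d))
            (tree_inj_f mc (composePoly g (cofreeCounit q)) h2 d)) := by
        refine HEq.trans (gdir_heq g ha2 ?_) (heq_of_eq ih)
        exact ((cast_heq _ _).trans (cast_heq _ _)).trans (cast_heq _ _).symm
      refine Eq.trans (congrArg (g.onDir a) happ.symm) ?_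
      refine key.trans ?_
      exact congrArg (mc.δ.onDir a) (mk_sigma_eq EZ1 hZ2)

end Uniq
end CofreeAux
namespace CofreeAux
variable {c q : PFunctor.{u, u}}

theorem uniq (mc : ComonStr c) (g : PolyHom c (cofreePoly q))
    (hE : composePoly g (cofreeEps q) = mc.ε)
    (hD : composePoly g (cofreeDelta q) = composePoly mc.δ (compHom g g)) :
    g = buildHom mc (composePoly g (cofreeCounit q)) := by
  refine polyHom_ext (uniq_pos mc g hD) (fun a d d' hd => ?_)
  have hc : cast (congrArg (MPath q) (uniq_pos mc g hD a)) d = d' :=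
    eq_of_heq ((cast_heq _ _).trans hd)
  subst hc
  have h := uniq_dir mc g hE hD (cast (congrArg (MPath q) (uniq_pos mc g hD a)) d) a
    (uniq_pos mc g hD a) rfl
  erw [cast_roundtrip] at h
  exact h

end CofreeAux

/-- The cofree comonad functor is right adjoint to the forgetful
functor from `◁`-comonoids to `Poly`: for every `◁`-comonoid `c` and polynomial `q`,
postcomposition with the counit `c_q → q` is a bijection between comonoid maps
`c → c_q` and polynomial maps `U(c) → q`.  (Here the comonoid structure on `c_q` has
counit `cofreeEps` and comultiplication `cofreeDelta`.) -/
theorem cofreeComonad_adjunction (c q : PFunctor.{u, u}) (mc : ComonStr c)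
    (mq : ComonStr (cofreePoly q)) (hε : mq.ε = cofreeEps q) (hδ : mq.δ = cofreeDelta q) :
    Function.Bijective
      (fun g : { g : PolyHom c (cofreePoly q) // IsPolyComonoidHom mc mq g } =>
        composePoly g.1 (cofreeCounit q)) := by
  constructor
  · rintro ⟨g1, hE1, hD1⟩ ⟨g2, hE2, hD2⟩ h
    rw [hε] at hE1 hE2
    rw [hδ] at hD1 hD2
    simp only at h
    apply Subtype.ext
    calc g1 = CofreeAux.buildHom mc (composePoly g1 (cofreeCounit q)) :=
          CofreeAux.uniq mc g1 hE1 hD1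
      _ = CofreeAux.buildHom mc (composePoly g2 (cofreeCounit q)) :=
          congrArg (CofreeAux.buildHom mc) h
      _ = g2 := (CofreeAux.uniq mc g2 hE2 hD2).symm
  · intro φ
    refine ⟨⟨CofreeAux.buildHom mc φ, ?_, ?_⟩, CofreeAux.build_counit mc φ⟩
    · rw [hε]; exact CofreeAux.build_eps mc φ
    · rw [hδ]; exact CofreeAux.build_delta mc φ
end
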